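/- A closed fact F is derivable from a set of Horn clauses R (in classical first-order logic, treating clauses as universally quantified implications) if and only if there exists a finite derivation tree of F from R (where each internal node labeled by a clause R' with incoming edge F0 and outgoing edges F1,...,Fn satisfies that R' subsumes {F1,...,Fn} ⇒ F0). -/

import Mathlib

/-- First-order terms over function symbols `F`, with natural-number variables. -/
inductive Trm (F : Type) : Type
  | var : Nat → Trm F
  | app : F → List (Trm F) → Trm F

namespace Trm

variable {F : Type}

/-- Homomorphic extension of a substitution to terms. -/
def subst (σ : Nat → Trm F) : Trm F → Trm F
  | var x => σ x
  | app f ts => app f (ts.attach.map (fun t => subst σ t.1))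
decreasing_by
  simp_wf
  have := List.sizeOf_lt_of_mem t.2
  omega

/-- `VarOcc x t` : variable `x` occurs in term `t`. -/
inductive VarOcc (x : Nat) : Trm F → Prop
  | var : VarOcc x (var x)
  | app {f : F} {ts : List (Trm F)} {t : Trm F} : t ∈ ts → VarOcc x t → VarOcc x (app f ts)

end Trm

/-- A term is closed when no variable occurs in it. -/
def ClosedT {F : Type} (t : Trm F) : Prop := ∀ x, ¬ Trm.VarOcc x t

/-- A fact is an atom `P(t1,...,tn)`. -/
structure Fct (P F : Type) where
  pred : P
  args : List (Trm F)

def Fct.subst {P F : Type} (σ : Nat → Trm F) (a : Fct P F) : Fct P F :=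
  ⟨a.pred, a.args.map (Trm.subst σ)⟩

def Fct.Closed {P F : Type} (a : Fct P F) : Prop := ∀ t ∈ a.args, ClosedT t

def Fct.VarOcc {P F : Type} (x : Nat) (a : Fct P F) : Prop := ∃ t ∈ a.args, Trm.VarOcc x t

/-- A Horn clause: a finite multiset of hypotheses and a conclusion. -/
structure Clause (P F : Type) where
  hyp : Multiset (Fct P F)
  concl : Fct P F

/-- `(H1 ⇒ C1)` subsumes `(H2 ⇒ C2)` iff some substitution σ has `σ C1 = C2` and `σ H1 ⊆ H2`. -/
def Subsumes {P F : Type} (c1 c2 : Clause P F) : Prop :=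
  ∃ σ : Nat → Trm F, Fct.subst σ c1.concl = c2.concl ∧ c1.hyp.map (Fct.subst σ) ≤ c2.hyp

/-- Derivability of a closed fact via a finite derivation tree: each node is labeled by a
clause of `R` that subsumes the local inference `{labels of outgoing edges} ⇒ label of
incoming edge`. -/
inductive DTree {P F : Type} (R : Set (Clause P F)) : Fct P F → Prop
  | node (cl : Clause P F) (hs : Multiset (Fct P F)) (C : Fct P F) :
      cl ∈ R → Subsumes cl ⟨hs, C⟩ → (∀ f ∈ hs, DTree R f) → DTree R C

/-- A first-order structure interpreting function and predicate symbols. -/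
structure Struc (P F : Type) where
  carrier : Type
  interpF : F → List carrier → carrier
  interpP : P → List carrier → Prop

/-- Evaluation of a term in a structure under a valuation of the variables. -/
def evalT {P F : Type} (M : Struc P F) (v : Nat → M.carrier) : Trm F → M.carrier
  | .var x => v x
  | .app f ts => M.interpF f (ts.attach.map (fun t => evalT M v t.1))
decreasing_by
  simp_wf
  have := List.sizeOf_lt_of_mem t.2
  omega

/-- Truth of a fact in a structure under a valuation. -/
def evalFct {P F : Type} (M : Struc P F) (v : Nat → M.carrier) (a : Fct P F) : Prop :=
  M.interpP a.pred (a.args.map (evalT M v))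

/-- A structure satisfies the universal closure of a clause. -/
def SatClause {P F : Type} (M : Struc P F) (c : Clause P F) : Prop :=
  ∀ v : Nat → M.carrier, (∀ f ∈ c.hyp, evalFct M v f) → evalFct M v c.concl


lemma Trm.subst_app {F : Type} (σ : Nat → Trm F) (f : F) (ts : List (Trm F)) :
    Trm.subst σ (Trm.app f ts) = Trm.app f (ts.map (Trm.subst σ)) := by
  rw [Trm.subst]
  congr 1
  simp

lemma evalT_app {P F : Type} (M : Struc P F) (v : Nat → M.carrier) (f : F) (ts : List (Trm F)) :
    evalT M v (Trm.app f ts) = M.interpF f (ts.map (evalT M v)) := by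
  rw [evalT]
  congr 1
  simp

lemma evalT_subst {P F : Type} (M : Struc P F) (v : Nat → M.carrier) (σ : Nat → Trm F) :
    ∀ t : Trm F, evalT M v (t.subst σ) = evalT M (fun x => evalT M v (σ x)) t := by
  intro t
  induction t using Trm.subst.induct with
  | case1 x => simp [Trm.subst, evalT]
  | case2 f ts ih =>
    rw [Trm.subst_app, evalT_app, evalT_app, List.map_map]
    congr 1
    apply List.map_congr_left
    intro a ha
    exact ih ⟨a, ha⟩


lemma Trm.subst_var {F : Type} : ∀ t : Trm F, Trm.subst Trm.var t = t := by
  intro t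
  induction t using Trm.subst.induct with
  | case1 x => rw [Trm.subst]
  | case2 f ts ih =>
    rw [Trm.subst_app]
    congr 1
    conv_rhs => rw [← List.map_id ts]
    apply List.map_congr_left
    intro a ha
    exact ih ⟨a, ha⟩

lemma evalFct_subst {P F : Type} (M : Struc P F) (v : Nat → M.carrier) (σ : Nat → Trm F)
    (a : Fct P F) :
    evalFct M v (Fct.subst σ a) = evalFct M (fun x => evalT M v (σ x)) a := by
  unfold evalFct Fct.subst
  simp only [List.map_map]
  congr 1
  apply List.map_congr_left
  intro t ht
  exact evalT_subst M v σ t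

/-- The Herbrand structure associated to `R`. -/
def Herbrand {P F : Type} (R : Set (Clause P F)) : Struc P F :=
  ⟨Trm F, Trm.app, fun p ts => DTree R ⟨p, ts⟩⟩

lemma evalT_herbrand {P F : Type} (R : Set (Clause P F)) (v : Nat → Trm F) :
    ∀ t : Trm F, evalT (Herbrand R) v t = Trm.subst v t := by
  intro t
  induction t using Trm.subst.induct with
  | case1 x => rw [Trm.subst]; exact evalT.eq_1 (Herbrand R) v x
  | case2 f ts ih =>
    rw [Trm.subst_app, evalT_app (Herbrand R) v]
    show Trm.app f _ = _
    congr 1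
    apply List.map_congr_left
    intro a ha
    exact ih ⟨a, ha⟩

lemma evalFct_herbrand {P F : Type} (R : Set (Clause P F)) (v : Nat → Trm F) (a : Fct P F) :
    evalFct (Herbrand R) v a = DTree R (Fct.subst v a) := by
  unfold evalFct Fct.subst
  show DTree R _ = DTree R _
  congr 2
  apply List.map_congr_left
  intro t ht
  exact evalT_herbrand R v t

/-- A closed fact `Fc` is a logical consequence (in classical first-order logic) of the
universal closures of the clauses of `R` if and only if there is a finite derivation tree
of `Fc` from `R`. -/
theorem derivable_iff_derivation_tree {P F : Type}
    (R : Set (Clause P F)) (Fc : Fct P F) (hFc : Fc.Closed) :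
    (∀ M : Struc P F, (∀ c ∈ R, SatClause M c) → ∀ v : Nat → M.carrier, evalFct M v Fc) ↔
      DTree R Fc := by
  constructor
  · intro h
    have hsat : ∀ c ∈ R, SatClause (Herbrand R) c := by
      intro c hc v hhyp
      rw [evalFct_herbrand R v]
      refine DTree.node c (c.hyp.map (Fct.subst v)) _ hc ⟨v, rfl, le_refl _⟩ ?_
      intro f hf
      obtain ⟨g, hg, rfl⟩ := Multiset.mem_map.mp hf
      have := hhyp g hg
      rwa [evalFct_herbrand R v] at this
    have := h (Herbrand R) hsat Trm.var
    rw [evalFct_herbrand] at this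
    have he : Fct.subst Trm.var Fc = Fc := by
      unfold Fct.subst
      have : Fc.args.map (Trm.subst Trm.var) = Fc.args := by
        conv_rhs => rw [← List.map_id Fc.args]
        apply List.map_congr_left
        intro t ht
        exact Trm.subst_var t
      rw [this]
    rwa [he] at this
  · intro h M hM v
    clear hFc
    induction h with
    | node cl hs C hcl hsub _ ih =>
      obtain ⟨σ, hconcl, hhyp⟩ := hsub
      have := hM cl hcl (fun x => evalT M v (σ x)) ?_
      · rw [← evalFct_subst, hconcl] at this
        exact this
      · intro f hf
        have hmem : Fct.subst σ f ∈ hs :=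
          Multiset.subset_of_le hhyp (Multiset.mem_map_of_mem _ hf)
        have := ih (Fct.subst σ f) hmem
        rwa [evalFct_subst] at this
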